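/- Fix an integer s ≥ 2. With a = (2s−1,2s)(4s−1,4s) and b = (1,3,5,…,4s−1,2,4,6,…,4s) in Sym(4s), one has b^{2s} = (1,2)(3,4)···(4s−1,4s) = a · a^b · a^{b²} ··· a^{b^{s−1}}. -/

import Mathlib

private def ppos (s v : ℕ) : ℕ := if v % 2 = 0 then v / 2 else 2 * s + v / 2
private def pval (s p : ℕ) : ℕ := if p < 2 * s then 2 * p else 2 * (p - 2 * s) + 1

private lemma ppos_lt {s v : ℕ} (hs : 1 ≤ s) (hv : v < 4 * s) : ppos s v < 4 * s := by
  unfold ppos; split_ifs <;> omega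

private lemma pval_ppos {s v : ℕ} (hv : v < 4 * s) : pval s (ppos s v) = v := by
  unfold ppos pval; split_ifs <;> omega

private lemma ppos_pval {s p : ℕ} (hp : p < 4 * s) : ppos s (pval s p) = p := by
  unfold ppos pval; split_ifs <;> omega

private lemma swap_val {n : ℕ} (u v x : Fin n) :
    ((Equiv.swap u v) x : ℕ) =
      if (x : ℕ) = (u : ℕ) then (v : ℕ) else if (x : ℕ) = (v : ℕ) then (u : ℕ) else (x : ℕ) := by
  rw [Equiv.swap_apply_def]
  split_ifs <;> simp_all [Fin.ext_iff]

private lemma prod_fix {α : Type*} (l : List (Equiv.Perm α)) (x : α)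
    (h : ∀ g ∈ l, g x = x) : l.prod x = x := by
  induction l with
  | nil => simp
  | cons g l ih =>
    rw [List.prod_cons, Equiv.Perm.mul_apply,
      ih (fun g hg => h g (List.mem_cons_of_mem _ hg)), h g List.mem_cons_self]

private lemma prod_ofFn_apply {α : Type*} : ∀ {n : ℕ} (f : Fin n → Equiv.Perm α) (x : α)
    (j : Fin n), (∀ i, i ≠ j → f i x = x) → (∀ i, i ≠ j → f i (f j x) = f j x) →
    (List.ofFn f).prod x = f j x := by
  intro n
  induction n with
  | zero => intro f x j; exact j.elim0
  | succ n ih =>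
    intro f x j h1 h2
    rw [List.ofFn_succ, List.prod_cons, Equiv.Perm.mul_apply]
    rcases Fin.eq_zero_or_eq_succ j with hj | ⟨j', hj⟩
    · subst hj
      rw [prod_fix _ x ?_]
      intro g hg
      obtain ⟨i, rfl⟩ := List.mem_ofFn.mp hg
      exact h1 _ (Fin.succ_ne_zero i)
    · subst hj
      rw [ih (fun i => f i.succ) x j'
        (fun i hi => h1 _ (by simpa [Fin.succ_inj] using hi))
        (fun i hi => h2 _ (by simpa [Fin.succ_inj] using hi))]
      exact h2 0 (Ne.symm (Fin.succ_ne_zero j'))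

private lemma bpow_val {s : ℕ} (hs : 1 ≤ s) (b : Equiv.Perm (Fin (4 * s)))
    (hb : ∀ i : Fin (4 * s), (b i : ℕ) =
      if (i : ℕ) % 2 = 0 then (if (i : ℕ) = 4 * s - 2 then 1 else (i : ℕ) + 2)
      else (if (i : ℕ) = 4 * s - 1 then 0 else (i : ℕ) + 2)) :
    ∀ (k : ℕ) (x : Fin (4 * s)), ((b ^ k) x : ℕ) = pval s ((ppos s (x : ℕ) + k) % (4 * s)) := by
  have hb1 : ∀ x : Fin (4 * s), (b x : ℕ) = pval s ((ppos s (x : ℕ) + 1) % (4 * s)) := by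
    intro x
    have hx := x.2
    by_cases h4 : (x : ℕ) = 4 * s - 1
    · have hpp : ppos s (x : ℕ) + 1 = 4 * s := by unfold ppos; split_ifs <;> omega
      rw [hb x, hpp, Nat.mod_self]
      unfold pval; split_ifs <;> omega
    · have hpp : ppos s (x : ℕ) + 1 < 4 * s := by unfold ppos; split_ifs <;> omega
      rw [hb x, Nat.mod_eq_of_lt hpp]
      unfold ppos pval; split_ifs <;> omega
  intro k
  induction k with
  | zero =>
    intro x
    simp only [pow_zero, Equiv.Perm.one_apply, Nat.add_zero]
    rw [Nat.mod_eq_of_lt (ppos_lt hs x.2), pval_ppos x.2]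
  | succ k ih =>
    intro x
    have h1 : (b ^ (k + 1)) x = (b ^ k) (b x) := by
      rw [pow_succ, Equiv.Perm.mul_apply]
    rw [h1, ih (b x)]
    have h2 : ppos s ((b x : ℕ)) = (ppos s (x : ℕ) + 1) % (4 * s) := by
      rw [hb1 x]; exact ppos_pval (Nat.mod_lt _ (by omega))
    rw [h2, Nat.mod_add_mod]
    have h3 : ppos s (x : ℕ) + 1 + k = ppos s (x : ℕ) + (k + 1) := by omega
    rw [h3]

set_option maxHeartbeats 3200000 in
/-- Fix `s ≥ 2`. With `a = (2s−1,2s)(4s−1,4s)` and `b = (1,3,5,…,4s−1,2,4,6,…,4s)` in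
`Sym(4s)`, one has `b^{2s} = (1,2)(3,4)···(4s−1,4s) = a · a^b · a^{b²} ··· a^{b^{s−1}}`.

Here `Sym(4s)` is realized as `Equiv.Perm (Fin (4s))` with points `0,…,4s−1` corresponding
to `1,…,4s`. Since the paper composes permutations left-to-right while Mathlib's
`Equiv.Perm` composes right-to-left, the paper's conjugate `a^{b^i} = b^{-i} a b^{i}` is
`b^i * a * (b^i)⁻¹` here (the factors of both products below commute pairwise, so the order
of the factors is immaterial). -/
theorem stmt6 (s : ℕ) (hs : 2 ≤ s)
    (a b : Equiv.Perm (Fin (4 * s)))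
    (ha : a = Equiv.swap ⟨2 * s - 2, by omega⟩ ⟨2 * s - 1, by omega⟩ *
      Equiv.swap ⟨4 * s - 2, by omega⟩ ⟨4 * s - 1, by omega⟩)
    (hb : ∀ i : Fin (4 * s), (b i : ℕ) =
      if (i : ℕ) % 2 = 0 then (if (i : ℕ) = 4 * s - 2 then 1 else (i : ℕ) + 2)
      else (if (i : ℕ) = 4 * s - 1 then 0 else (i : ℕ) + 2)) :
    b ^ (2 * s) =
      (List.ofFn fun i : Fin (2 * s) =>
        Equiv.swap (⟨2 * (i : ℕ), by have := i.2; omega⟩ : Fin (4 * s))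
          ⟨2 * (i : ℕ) + 1, by have := i.2; omega⟩).prod ∧
    b ^ (2 * s) =
      (List.ofFn fun i : Fin s => b ^ (i : ℕ) * a * (b ^ (i : ℕ))⁻¹).prod := by
  have key := bpow_val (s := s) (by omega) b hb
  -- value of b ^ (2*s)
  have hb2s : ∀ x : Fin (4 * s),
      ((b ^ (2 * s)) x : ℕ) = (if (x : ℕ) % 2 = 0 then (x : ℕ) + 1 else (x : ℕ) - 1) := by
    intro x
    have hx := x.2
    rw [key (2 * s) x]
    by_cases h2 : (x : ℕ) % 2 = 0
    · have h1 : ppos s (x : ℕ) = (x : ℕ) / 2 := by unfold ppos; split_ifs <;> omega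
      rw [h1, Nat.mod_eq_of_lt (by omega)]
      unfold pval; split_ifs <;> omega
    · have h1 : ppos s (x : ℕ) = 2 * s + (x : ℕ) / 2 := by unfold ppos; split_ifs <;> omega
      have h3 : (2 * s + (x : ℕ) / 2 + 2 * s) % (4 * s) = (x : ℕ) / 2 := by
        rw [show 2 * s + (x : ℕ) / 2 + 2 * s = 4 * s + (x : ℕ) / 2 by ring,
          Nat.add_mod_left, Nat.mod_eq_of_lt (by omega)]
      rw [h1, h3]
      unfold pval; split_ifs <;> omega
  constructor
  · ext x
    have hx := x.2
    rw [prod_ofFn_apply _ x ⟨(x : ℕ) / 2, by omega⟩ ?_ ?_]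
    · rw [hb2s x, swap_val]
      simp only [Fin.val_mk]
      split_ifs <;> omega
    · intro i hi
      have hi' : (i : ℕ) ≠ (x : ℕ) / 2 := fun h => hi (Fin.ext h)
      apply Fin.ext
      rw [swap_val]
      simp only [Fin.val_mk]
      split_ifs <;> omega
    · intro i hi
      have hi' : (i : ℕ) ≠ (x : ℕ) / 2 := fun h => hi (Fin.ext h)
      have hy : ((Equiv.swap (⟨2 * ((x : ℕ) / 2), by omega⟩ : Fin (4 * s))
          ⟨2 * ((x : ℕ) / 2) + 1, by omega⟩) x : ℕ) / 2 = (x : ℕ) / 2 := by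
        rw [swap_val]; simp only [Fin.val_mk]; split_ifs <;> omega
      apply Fin.ext
      rw [swap_val]
      simp only [Fin.val_mk] at hy ⊢
      split_ifs <;> omega
  · have hwlt1 : 2 * s - 2 < 4 * s := by omega
    have hwlt2 : 2 * s - 1 < 4 * s := by omega
    have hwlt3 : 4 * s - 2 < 4 * s := by omega
    have hwlt4 : 4 * s - 1 < 4 * s := by omega
    have hw1 : ∀ (i : Fin s) (h : 2 * s - 2 < 4 * s),
        ((b ^ (i : ℕ)) ⟨2 * s - 2, h⟩ : ℕ) = 2 * s - 2 + 2 * (i : ℕ) := by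
      intro i h
      have hi := i.2
      rw [key]
      simp only [Fin.val_mk]
      have h1 : ppos s (2 * s - 2) = s - 1 := by unfold ppos; split_ifs <;> omega
      rw [h1, Nat.mod_eq_of_lt (by omega)]
      unfold pval; split_ifs <;> omega
    have hw2 : ∀ (i : Fin s) (h : 2 * s - 1 < 4 * s),
        ((b ^ (i : ℕ)) ⟨2 * s - 1, h⟩ : ℕ) = 2 * s - 1 + 2 * (i : ℕ) := by
      intro i h
      have hi := i.2
      rw [key]
      simp only [Fin.val_mk]
      have h1 : ppos s (2 * s - 1) = 3 * s - 1 := by unfold ppos; split_ifs <;> omega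
      rw [h1, Nat.mod_eq_of_lt (by omega)]
      unfold pval; split_ifs <;> omega
    have hw3 : ∀ (i : Fin s) (h : 4 * s - 2 < 4 * s),
        ((b ^ (i : ℕ)) ⟨4 * s - 2, h⟩ : ℕ) =
          (if (i : ℕ) = 0 then 4 * s - 2 else 2 * (i : ℕ) - 1) := by
      intro i h
      have hi := i.2
      rw [key]
      simp only [Fin.val_mk]
      have h1 : ppos s (4 * s - 2) = 2 * s - 1 := by unfold ppos; split_ifs <;> omega
      rw [h1, Nat.mod_eq_of_lt (by omega)]
      unfold pval; split_ifs <;> omega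
    have hw4 : ∀ (i : Fin s) (h : 4 * s - 1 < 4 * s),
        ((b ^ (i : ℕ)) ⟨4 * s - 1, h⟩ : ℕ) =
          (if (i : ℕ) = 0 then 4 * s - 1 else 2 * (i : ℕ) - 2) := by
      intro i h
      have hi := i.2
      rw [key]
      simp only [Fin.val_mk]
      have h1 : ppos s (4 * s - 1) = 4 * s - 1 := by unfold ppos; split_ifs <;> omega
      rw [h1]
      by_cases hi0 : (i : ℕ) = 0
      · rw [hi0, Nat.mod_eq_of_lt (by omega)]
        unfold pval; split_ifs <;> omega
      · rw [Nat.mod_eq_sub_mod (by omega), Nat.mod_eq_of_lt (by omega)]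
        unfold pval; split_ifs <;> omega
    have hconj : ∀ (σ τ ρ : Equiv.Perm (Fin (4 * s))),
        σ * (τ * ρ) * σ⁻¹ = (σ * τ * σ⁻¹) * (σ * ρ * σ⁻¹) := by
      intros; group
    have hgeq : ∀ i : Fin s, b ^ (i : ℕ) * a * (b ^ (i : ℕ))⁻¹ =
        Equiv.swap ((b ^ (i : ℕ)) ⟨2 * s - 2, hwlt1⟩) ((b ^ (i : ℕ)) ⟨2 * s - 1, hwlt2⟩) *
        Equiv.swap ((b ^ (i : ℕ)) ⟨4 * s - 2, hwlt3⟩) ((b ^ (i : ℕ)) ⟨4 * s - 1, hwlt4⟩) := by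
      intro i
      rw [ha, hconj, Equiv.swap_apply_apply, Equiv.swap_apply_apply]
    have hgapp : ∀ (i : Fin s) (z : Fin (4 * s)),
        ((b ^ (i : ℕ) * a * (b ^ (i : ℕ))⁻¹) z : ℕ) =
          if (z : ℕ) = (if (i : ℕ) = 0 then 4 * s - 2 else 2 * (i : ℕ) - 1) then
            (if (i : ℕ) = 0 then 4 * s - 1 else 2 * (i : ℕ) - 2)
          else if (z : ℕ) = (if (i : ℕ) = 0 then 4 * s - 1 else 2 * (i : ℕ) - 2) then
            (if (i : ℕ) = 0 then 4 * s - 2 else 2 * (i : ℕ) - 1)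
          else if (z : ℕ) = 2 * s - 2 + 2 * (i : ℕ) then 2 * s - 1 + 2 * (i : ℕ)
          else if (z : ℕ) = 2 * s - 1 + 2 * (i : ℕ) then 2 * s - 2 + 2 * (i : ℕ)
          else (z : ℕ) := by
      intro i z
      have hi := i.2
      have hz := z.2
      rw [hgeq i, Equiv.Perm.mul_apply, swap_val, swap_val,
        hw1 i hwlt1, hw2 i hwlt2, hw3 i hwlt3, hw4 i hwlt4]
      split_ifs <;> omega
    have hgfix : ∀ (i : Fin s) (z : Fin (4 * s)),
        (z : ℕ) / 2 ≠ s - 1 + (i : ℕ) →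
        (z : ℕ) / 2 ≠ (if (i : ℕ) = 0 then 2 * s - 1 else (i : ℕ) - 1) →
        (b ^ (i : ℕ) * a * (b ^ (i : ℕ))⁻¹) z = z := by
      intro i z hA hB
      have hi := i.2
      have hz := z.2
      apply Fin.ext
      rw [hgapp i z]
      split_ifs at hB ⊢ <;> omega
    ext x
    have hx := x.2
    obtain ⟨j, hjv⟩ : ∃ j : Fin s, (j : ℕ) =
        (if (x : ℕ) / 2 ≤ s - 2 then (x : ℕ) / 2 + 1
         else if (x : ℕ) / 2 = 2 * s - 1 then 0 else (x : ℕ) / 2 - (s - 1)) := by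
      split_ifs
      · exact ⟨⟨(x : ℕ) / 2 + 1, by omega⟩, rfl⟩
      · exact ⟨⟨0, by omega⟩, rfl⟩
      · exact ⟨⟨(x : ℕ) / 2 - (s - 1), by omega⟩, rfl⟩
    have hfix1 : ∀ i : Fin s, i ≠ j → (b ^ (i : ℕ) * a * (b ^ (i : ℕ))⁻¹) x = x := by
      intro i hi
      have hi' : (i : ℕ) ≠ (j : ℕ) := fun h => hi (Fin.ext h)
      have hiub := i.2
      refine hgfix i x (by split_ifs at hjv <;> omega) (by split_ifs at hjv ⊢ <;> omega)
    have hy2 : ((b ^ (j : ℕ) * a * (b ^ (j : ℕ))⁻¹) x : ℕ) / 2 = (x : ℕ) / 2 := by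
      have hjub := j.2
      rw [hgapp]
      split_ifs at hjv ⊢ <;> omega
    have hfix2 : ∀ i : Fin s, i ≠ j →
        (b ^ (i : ℕ) * a * (b ^ (i : ℕ))⁻¹) ((b ^ (j : ℕ) * a * (b ^ (j : ℕ))⁻¹) x) =
          (b ^ (j : ℕ) * a * (b ^ (j : ℕ))⁻¹) x := by
      intro i hi
      have hi' : (i : ℕ) ≠ (j : ℕ) := fun h => hi (Fin.ext h)
      have hiub := i.2
      refine hgfix i _ (by rw [hy2]; split_ifs at hjv <;> omega)
        (by rw [hy2]; split_ifs at hjv ⊢ <;> omega)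
    rw [prod_ofFn_apply _ x j hfix1 hfix2, hb2s x, hgapp]
    have hjub := j.2
    split_ifs at hjv ⊢ <;> omega
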